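/- Combining the two preceding identities: if α_k = ∑_i q_{i,1} − ∑_i ρ_k^{-i} σ_k q_{i,-1}, and the boundary rates are h̄_{i,1}(n_1,0) = q_{i,1}, h̄_{1,0}(n_1,0) = h̄_{1,0} constant, and h̄_{-1,0}(n_1,0) given by the single direction inhomogeneous construction, then π̄(n_1,n_2) = ∑_k c_k ρ_k^{n_1} σ_k^{n_2} satisfies the horizontal boundary balance equation ∑_{i=-1}^1 π̄(n_1−i,1) q_{i,-1} + π̄(n_1−1,0) h̄_{1,0} + π̄(n_1+1,0) h̄_{-1,0}(n_1+1,0) = π̄(n_1,0)(∑_{i=-1}^1 q_{i,1} + h̄_{-1,0}(n_1,0) + h̄_{1,0}) for all n_1 ≥ 1. -/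
import Mathlib

open Finset

lemma icc_sum' (f : ℤ → ℝ) : ∑ i ∈ Finset.Icc (-1:ℤ) 1, f i = f (-1) + f 0 + f 1 := by
  have h : Finset.Icc (-1:ℤ) 1 = {-1, 0, 1} := by decide
  rw [h, Finset.sum_insert (by decide), Finset.sum_insert (by decide), Finset.sum_singleton]
  ring

theorem stmt_10 (K : ℕ) (ρ σ c α : Fin K → ℝ)
    (hρ : ∀ k, ρ k ∈ Set.Ioo (0:ℝ) 1) (hσ : ∀ k, σ k ∈ Set.Ioo (0:ℝ) 1)
    (q : ℤ → ℤ → ℝ) (hq : ∀ i j, 0 ≤ q i j)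
    (hα : ∀ k, α k = (∑ i ∈ Finset.Icc (-1:ℤ) 1, q i 1) -
      ∑ i ∈ Finset.Icc (-1:ℤ) 1, ρ k ^ (-i) * σ k * q i (-1))
    (πb : ℤ → ℤ → ℝ)
    (hπ : ∀ n₁ n₂ : ℤ, πb n₁ n₂ = ∑ k, c k * ρ k ^ n₁ * σ k ^ n₂)
    (hne : ∀ n₁ : ℤ, 1 ≤ n₁ → πb n₁ 0 ≠ 0)
    (hb10 : ℝ) (hhb10 : 0 ≤ hb10)
    (hbar : ℤ → ℝ)
    (hhbar : ∀ n₁ : ℤ, 1 ≤ n₁ →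
      hbar n₁ = ((∑ k, c k * ρ k ^ (n₁ - 1)) * hb10 -
        ∑ k, c k * α k * (1 - ρ k)⁻¹ * ρ k ^ n₁) / (∑ k, c k * ρ k ^ n₁)) :
    ∀ n₁ : ℤ, 1 ≤ n₁ →
      (∑ i ∈ Finset.Icc (-1:ℤ) 1, πb (n₁ - i) 1 * q i (-1)) +
        πb (n₁ - 1) 0 * hb10 + πb (n₁ + 1) 0 * hbar (n₁ + 1) =
        πb n₁ 0 * ((∑ i ∈ Finset.Icc (-1:ℤ) 1, q i 1) + hbar n₁ + hb10) := by
  intro n₁ hn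
  have hρ0 : ∀ k, ρ k ≠ 0 := fun k => ne_of_gt (hρ k).1
  have hρ1 : ∀ k, (1:ℝ) - ρ k ≠ 0 := fun k => sub_ne_zero.mpr (ne_of_lt (hρ k).2).symm
  have hπ0 : ∀ n : ℤ, πb n 0 = ∑ k, c k * ρ k ^ n := by
    intro n; rw [hπ]; simp
  have key : ∀ n : ℤ, 1 ≤ n → πb n 0 * hbar n =
      (∑ k, c k * ρ k ^ (n - 1)) * hb10 - ∑ k, c k * α k * (1 - ρ k)⁻¹ * ρ k ^ n := by
    intro n hn1
    rw [hhbar n hn1, hπ0, mul_div_cancel₀]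
    rw [← hπ0]; exact hne n hn1
  have k2 := key (n₁ + 1) (by linarith)
  have e2 : n₁ + 1 - 1 = n₁ := by ring
  rw [e2] at k2
  have hR : πb n₁ 0 * ((∑ i ∈ Finset.Icc (-1:ℤ) 1, q i 1) + hbar n₁ + hb10)
      = πb n₁ 0 * (∑ i ∈ Finset.Icc (-1:ℤ) 1, q i 1) + πb n₁ 0 * hbar n₁
        + πb n₁ 0 * hb10 := by ring
  rw [hR, key n₁ hn, k2]
  rw [icc_sum' (fun i => πb (n₁ - i) 1 * q i (-1)), icc_sum' (fun i => q i 1)]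
  simp only [hπ, hπ0, hα, icc_sum' (fun i => ρ _ ^ (-i) * σ _ * q i (-1)),
    icc_sum' (fun i => q i 1)]
  simp only [Finset.sum_mul, ← Finset.sum_sub_distrib, ← Finset.sum_add_distrib]
  refine Finset.sum_congr rfl fun k _ => ?_
  simp only [zpow_one, zpow_zero, neg_neg, neg_zero, sub_neg_eq_add, sub_zero, zpow_neg, mul_one]
  have h1 : ρ k ^ (n₁ + 1) = ρ k ^ n₁ * ρ k := zpow_add_one₀ (hρ0 k) n₁
  have h2 : ρ k ^ (n₁ - 1) = ρ k ^ n₁ * (ρ k)⁻¹ := by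
    rw [zpow_sub_one₀ (hρ0 k)]
  rw [h1, h2]
  have ha := hρ0 k
  have hb := hρ1 k
  field_simp
  ring
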